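/- Let (X,𝒜,ν) be a measure space, p ≥ 1, f₁,…,fₙ ∈ L^p(ν), and B = [b_{ij}], C = [c_{ij}] two n×n doubly stochastic matrices. Then ‖(f₁+⋯+fₙ)/n‖_p^p ≤ (1/n)∑_{i=1}^n ‖L_p^p(∑_{j=1}^n b_{ij}|fⱼ|, ∑_{j=1}^n c_{ij}|fⱼ|)‖_1 ≤ (‖f₁‖_p^p+⋯+‖fₙ‖_p^p)/n. -/

import Mathlib

open Finset MeasureTheory

/-- The `p`-th power of the `p`-logarithmic mean:
`L_p^p(a,b) = (b^{p+1} - a^{p+1})/((p+1)(b-a))` for `a ≠ b`, and `a^p` for `a = b`. -/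
noncomputable def LpPowP (p a b : ℝ) : ℝ :=
  if a = b then a ^ p else (b ^ (p + 1) - a ^ (p + 1)) / ((p + 1) * (b - a))

/-- Refinement of Jensen's inequality for the `p`-th power of the `L^p`-norm via two
doubly stochastic matrices, with the norms written as integrals. -/
lemma continuous_rpow_const' {p : ℝ} (hp : 0 ≤ p) : Continuous fun x : ℝ => x ^ p :=
  continuous_iff_continuousAt.2 fun x => Real.continuousAt_rpow_const x p (Or.inr hp)

lemma lpPowP_rep {p : ℝ} (hp : 1 ≤ p) (a b : ℝ) :
    LpPowP p a b = ∫ t in (0:ℝ)..1, ((b - a) * t + a) ^ p := by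
  rcases eq_or_ne a b with rfl | hab
  · simp [LpPowP]
  · rw [LpPowP, if_neg hab,
      intervalIntegral.integral_comp_mul_add (fun u => u ^ p) (sub_ne_zero.2 (Ne.symm hab)) a]
    have h0 : (b - a) * 0 + a = a := by ring
    have h1 : (b - a) * 1 + a = b := by ring
    rw [h0, h1, integral_rpow (Or.inl (by linarith)), smul_eq_mul]
    have hba : b - a ≠ 0 := sub_ne_zero.2 (Ne.symm hab)
    have hp1 : p + 1 ≠ 0 := by positivity
    rw [inv_mul_eq_div, div_div]

lemma two_point_rpow {p : ℝ} (hp : 1 ≤ p) {u v t : ℝ} (hu : 0 ≤ u) (hv : 0 ≤ v)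
    (ht0 : 0 ≤ t) (ht1 : t ≤ 1) :
    ((1 - t) * u + t * v) ^ p ≤ (1 - t) * u ^ p + t * v ^ p := by
  have h := (convexOn_rpow hp).2 (Set.mem_Ici.2 hu) (Set.mem_Ici.2 hv)
    (by linarith : (0:ℝ) ≤ 1 - t) ht0 (by ring)
  simpa [smul_eq_mul] using h

lemma half_rpow_le_lpPowP {p : ℝ} (hp : 1 ≤ p) {a b : ℝ} (ha : 0 ≤ a) (hb : 0 ≤ b) :
    ((a + b) / 2) ^ p ≤ LpPowP p a b := by
  have hp0 : (0:ℝ) ≤ p := by linarith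
  have hcont : ∀ u v : ℝ, Continuous fun t : ℝ => ((v - u) * t + u) ^ p := fun u v =>
    (continuous_rpow_const' hp0).comp (by continuity)
  have hrefl : (∫ t in (0:ℝ)..1, ((a - b) * t + b) ^ p)
      = ∫ t in (0:ℝ)..1, ((b - a) * t + a) ^ p := by
    have h := intervalIntegral.integral_comp_sub_left (a := 0) (b := 1) (fun t => ((b - a) * t + a) ^ p) 1
    have h2 : ∀ t : ℝ, ((b - a) * (1 - t) + a) = (a - b) * t + b := fun t => by ring
    simp only [h2] at h
    simpa using h
  have key : 2 * ((a + b) / 2) ^ p ≤ 2 * LpPowP p a b := by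
    have hmono : (∫ t in (0:ℝ)..1, (2 * ((a + b) / 2) ^ p))
        ≤ ∫ t in (0:ℝ)..1, (((b - a) * t + a) ^ p + ((a - b) * t + b) ^ p) := by
      apply intervalIntegral.integral_mono_on (by norm_num)
        (intervalIntegrable_const)
        (((hcont a b).add (hcont b a)).intervalIntegrable 0 1)
      intro t ht
      obtain ⟨ht0, ht1⟩ := ht
      have hu : (0:ℝ) ≤ (b - a) * t + a := by nlinarith
      have hv : (0:ℝ) ≤ (a - b) * t + b := by nlinarith
      have h2 := two_point_rpow hp hu hv (by norm_num : (0:ℝ) ≤ 1/2) (by norm_num)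
      have h3 : (1 - 1/2 : ℝ) * ((b - a) * t + a) + (1/2 : ℝ) * ((a - b) * t + b)
          = (a + b) / 2 := by ring
      rw [h3] at h2
      simp only [Pi.add_apply]
      linarith
    rw [intervalIntegral.integral_const, intervalIntegral.integral_add
      ((hcont a b).intervalIntegrable 0 1) ((hcont b a).intervalIntegrable 0 1), hrefl,
      ← lpPowP_rep hp a b] at hmono
    simp only [sub_zero, one_smul] at hmono
    linarith
  linarith

lemma lpPowP_le_half {p : ℝ} (hp : 1 ≤ p) {a b : ℝ} (ha : 0 ≤ a) (hb : 0 ≤ b) :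
    LpPowP p a b ≤ (a ^ p + b ^ p) / 2 := by
  have hp0 : (0:ℝ) ≤ p := by linarith
  have hcont : Continuous fun t : ℝ => ((b - a) * t + a) ^ p :=
    (continuous_rpow_const' hp0).comp (by continuity)
  rw [lpPowP_rep hp a b]
  have hlin : Continuous fun t : ℝ => (1 - t) * a ^ p + t * b ^ p := by continuity
  have hmono : (∫ t in (0:ℝ)..1, ((b - a) * t + a) ^ p)
      ≤ ∫ t in (0:ℝ)..1, ((1 - t) * a ^ p + t * b ^ p) := by
    apply intervalIntegral.integral_mono_on (by norm_num)
      (hcont.intervalIntegrable 0 1) (hlin.intervalIntegrable 0 1)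
    intro t ht
    have h3 : (b - a) * t + a = (1 - t) * a + t * b := by ring
    rw [h3]
    exact two_point_rpow hp ha hb ht.1 ht.2
  refine hmono.trans (le_of_eq ?_)
  have h4 : ∀ t : ℝ, (1 - t) * a ^ p + t * b ^ p = a ^ p + (b ^ p - a ^ p) * t := fun t => by
    ring
  simp only [h4]
  rw [intervalIntegral.integral_add intervalIntegrable_const
    ((by continuity : Continuous fun t : ℝ => (b ^ p - a ^ p) * t).intervalIntegrable 0 1), intervalIntegral.integral_const_mul, integral_id,
    intervalIntegral.integral_const]
  norm_num
  ring

theorem lp_norm_refinement_doubly_stochastic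
    {X : Type*} [MeasurableSpace X] (ν : Measure X)
    (p : ℝ) (hp : 1 ≤ p)
    {n : ℕ} (hn : 0 < n)
    (f : Fin n → X → ℝ) (hf : ∀ j, MemLp (f j) (ENNReal.ofReal p) ν)
    (b c : Fin n → Fin n → ℝ)
    (hb0 : ∀ i j, 0 ≤ b i j) (hbrow : ∀ i, ∑ j, b i j = 1) (hbcol : ∀ j, ∑ i, b i j = 1)
    (hc0 : ∀ i j, 0 ≤ c i j) (hcrow : ∀ i, ∑ j, c i j = 1) (hccol : ∀ j, ∑ i, c i j = 1) :
    (∫ x, |(∑ j, f j x) / n| ^ p ∂ν) ≤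
        (n : ℝ)⁻¹ *
          ∑ i, ∫ x, |LpPowP p (∑ j, b i j * |f j x|) (∑ j, c i j * |f j x|)| ∂ν ∧
      ((n : ℝ)⁻¹ *
          ∑ i, ∫ x, |LpPowP p (∑ j, b i j * |f j x|) (∑ j, c i j * |f j x|)| ∂ν) ≤
        (∑ j, ∫ x, |f j x| ^ p ∂ν) / n := by
  have hp0 : (0:ℝ) < p := lt_of_lt_of_le one_pos hp
  have hp0' : (0:ℝ) ≤ p := hp0.le
  have hn0 : ((n:ℝ)) ≠ 0 := Nat.cast_ne_zero.2 hn.ne'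
  have hninv : (0:ℝ) ≤ (n:ℝ)⁻¹ := by positivity
  have hq0 : ENNReal.ofReal p ≠ 0 := by
    simp only [ne_eq, ENNReal.ofReal_eq_zero, not_le]; exact hp0
  have hqT : ENNReal.ofReal p ≠ ⊤ := ENNReal.ofReal_ne_top
  have htr : (ENNReal.ofReal p).toReal = p := ENNReal.toReal_ofReal hp0'
  have hIntf : ∀ j, Integrable (fun x => |f j x| ^ p) ν := fun j => by
    have h := (hf j).integrable_norm_rpow hq0 hqT
    simpa [htr, Real.norm_eq_abs] using h
  set G : Fin n → X → ℝ :=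
    fun i x => LpPowP p (∑ j, b i j * |f j x|) (∑ j, c i j * |f j x|) with hGdef
  have hAnn : ∀ (w : Fin n → Fin n → ℝ), (∀ i j, 0 ≤ w i j) →
      ∀ i x, (0:ℝ) ≤ ∑ j, w i j * |f j x| := fun w hw i x =>
    Finset.sum_nonneg fun j _ => mul_nonneg (hw i j) (abs_nonneg _)
  have hGnn : ∀ i x, 0 ≤ G i x := fun i x =>
    le_trans (Real.rpow_nonneg
        (div_nonneg (add_nonneg (hAnn b hb0 i x) (hAnn c hc0 i x)) (by norm_num)) p)
      (half_rpow_le_lpPowP hp (hAnn b hb0 i x) (hAnn c hc0 i x))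
  have hGle : ∀ i x, G i x ≤ ∑ j, ((b i j + c i j) / 2) * |f j x| ^ p := by
    intro i x
    have h1 : G i x ≤ ((∑ j, b i j * |f j x|) ^ p + (∑ j, c i j * |f j x|) ^ p) / 2 :=
      lpPowP_le_half hp (hAnn b hb0 i x) (hAnn c hc0 i x)
    have h2 : (∑ j, b i j * |f j x|) ^ p ≤ ∑ j, b i j * |f j x| ^ p :=
      Real.rpow_arith_mean_le_arith_mean_rpow univ (b i) (fun j => |f j x|)
        (fun j _ => hb0 i j) (hbrow i) (fun j _ => abs_nonneg _) hp
    have h3 : (∑ j, c i j * |f j x|) ^ p ≤ ∑ j, c i j * |f j x| ^ p :=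
      Real.rpow_arith_mean_le_arith_mean_rpow univ (c i) (fun j => |f j x|)
        (fun j _ => hc0 i j) (hcrow i) (fun j _ => abs_nonneg _) hp
    have h4 : ((∑ j, b i j * |f j x| ^ p) + ∑ j, c i j * |f j x| ^ p) / 2
        = ∑ j, ((b i j + c i j) / 2) * |f j x| ^ p := by
      rw [← Finset.sum_add_distrib, Finset.sum_div]
      exact Finset.sum_congr rfl fun j _ => by ring
    linarith
  have hF : Measurable fun q : ℝ × ℝ => LpPowP p q.1 q.2 := by
    have h1 : Measurable fun x : ℝ => x ^ p := (continuous_rpow_const' hp0').measurable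
    have h2 : Measurable fun x : ℝ => x ^ (p + 1) :=
      (continuous_rpow_const' (by linarith)).measurable
    unfold LpPowP
    exact Measurable.ite (measurableSet_eq_fun measurable_fst measurable_snd)
      (h1.comp measurable_fst)
      (((h2.comp measurable_snd).sub (h2.comp measurable_fst)).div
        (measurable_const.mul (measurable_snd.sub measurable_fst)))
  have hAm : ∀ (w : Fin n → Fin n → ℝ) i,
      AEMeasurable (fun x => ∑ j, w i j * |f j x|) ν := fun w i =>
    Finset.aemeasurable_fun_sum _ fun j _ =>
      ((measurable_abs.comp_aemeasurable
        (hf j).aestronglyMeasurable.aemeasurable).const_mul _)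
  have hGm : ∀ i, AEStronglyMeasurable (G i) ν := fun i =>
    (hF.comp_aemeasurable ((hAm b i).prodMk (hAm c i))).aestronglyMeasurable
  have hBoundInt : ∀ i, Integrable (fun x => ∑ j, ((b i j + c i j) / 2) * |f j x| ^ p) ν :=
    fun i => integrable_finset_sum _ fun j _ => (hIntf j).const_mul _
  have hGint : ∀ i, Integrable (G i) ν := fun i =>
    (hBoundInt i).mono' (hGm i)
      (Filter.Eventually.of_forall fun x => by
        rw [Real.norm_eq_abs, abs_of_nonneg (hGnn i x)]; exact hGle i x)
  have hgoalrw : ∀ i, (∫ x, |LpPowP p (∑ j, b i j * |f j x|) (∑ j, c i j * |f j x|)| ∂ν)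
      = ∫ x, G i x ∂ν := fun i =>
    integral_congr_ae (Filter.Eventually.of_forall fun x => abs_of_nonneg (hGnn i x))
  simp only [hgoalrw]
  have colsum : ∀ (w : Fin n → Fin n → ℝ), (∀ j, ∑ i, w i j = 1) → ∀ (t : Fin n → ℝ),
      ∑ i, ∑ j, w i j * t j = ∑ j, t j := by
    intro w hw t
    rw [Finset.sum_comm]
    simp_rw [← Finset.sum_mul]
    simp [hw]
  have hhalfcol : ∀ j : Fin n, ∑ i, (b i j + c i j) / 2 = 1 := fun j => by
    rw [← Finset.sum_div, Finset.sum_add_distrib, hbcol, hccol]; norm_num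
  constructor
  · -- lower bound
    have hS : MemLp (fun x => (∑ j, f j x) / (n:ℝ)) (ENNReal.ofReal p) ν := by
      have h1 : MemLp (fun x => ∑ j, f j x) (ENNReal.ofReal p) ν :=
        memLp_finset_sum univ (fun j _ => hf j)
      have h2 := h1.const_mul ((n:ℝ)⁻¹)
      simpa [div_eq_inv_mul] using h2
    have hIntS : Integrable (fun x => |(∑ j, f j x) / (n:ℝ)| ^ p) ν := by
      have h := hS.integrable_norm_rpow hq0 hqT
      simpa [htr, Real.norm_eq_abs, abs_div, Nat.abs_cast] using h
    have hptw : ∀ x, |(∑ j, f j x) / (n:ℝ)| ^ p ≤ ∑ i, (n:ℝ)⁻¹ * G i x := by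
      intro x
      have h1 : |(∑ j, f j x) / (n:ℝ)| ^ p ≤ ((∑ j, |f j x|) / n) ^ p := by
        apply Real.rpow_le_rpow (abs_nonneg _) _ hp0'
        rw [abs_div, Nat.abs_cast]
        gcongr
        exact Finset.abs_sum_le_sum_abs _ _
      have hterm : ∀ i, ((∑ j, b i j * |f j x|) + ∑ j, c i j * |f j x|) / 2
          = ∑ j, ((b i j + c i j) / 2) * |f j x| := fun i => by
        rw [← Finset.sum_add_distrib, Finset.sum_div]
        exact Finset.sum_congr rfl fun j _ => by ring
      have hsum : ∑ i, (((∑ j, b i j * |f j x|) + ∑ j, c i j * |f j x|) / 2)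
          = ∑ j, |f j x| := by
        simp_rw [hterm]
        exact colsum _ hhalfcol _
      have h2 : (∑ j, |f j x|) / (n:ℝ)
          = ∑ i, (n:ℝ)⁻¹ * (((∑ j, b i j * |f j x|) + ∑ j, c i j * |f j x|) / 2) := by
        rw [← Finset.mul_sum, hsum, div_eq_inv_mul]
      have hw1 : ∑ _i : Fin n, (n:ℝ)⁻¹ = 1 := by
        rw [Finset.sum_const, Finset.card_univ, Fintype.card_fin, nsmul_eq_mul,
          mul_inv_cancel₀ hn0]
      have h3 : (∑ i, (n:ℝ)⁻¹ * (((∑ j, b i j * |f j x|) + ∑ j, c i j * |f j x|) / 2)) ^ p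
          ≤ ∑ i, (n:ℝ)⁻¹ * ((((∑ j, b i j * |f j x|) + ∑ j, c i j * |f j x|) / 2)) ^ p :=
        Real.rpow_arith_mean_le_arith_mean_rpow univ _ _ (fun _ _ => hninv) hw1
          (fun i _ => div_nonneg (add_nonneg (hAnn b hb0 i x) (hAnn c hc0 i x)) (by norm_num))
          hp
      have h4 : ∑ i, (n:ℝ)⁻¹ * ((((∑ j, b i j * |f j x|) + ∑ j, c i j * |f j x|) / 2)) ^ p
          ≤ ∑ i, (n:ℝ)⁻¹ * G i x :=
        Finset.sum_le_sum fun i _ => mul_le_mul_of_nonneg_left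
          (half_rpow_le_lpPowP hp (hAnn b hb0 i x) (hAnn c hc0 i x)) hninv
      calc |(∑ j, f j x) / (n:ℝ)| ^ p ≤ ((∑ j, |f j x|) / n) ^ p := h1
        _ = (∑ i, (n:ℝ)⁻¹ * (((∑ j, b i j * |f j x|) + ∑ j, c i j * |f j x|) / 2)) ^ p := by
            rw [h2]
        _ ≤ _ := h3.trans h4
    calc (∫ x, |(∑ j, f j x) / (n:ℝ)| ^ p ∂ν)
        ≤ ∫ x, ∑ i, (n:ℝ)⁻¹ * G i x ∂ν :=
          integral_mono hIntS
            (integrable_finset_sum _ fun i _ => (hGint i).const_mul _) hptw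
      _ = (n:ℝ)⁻¹ * ∑ i, ∫ x, G i x ∂ν := by
          rw [integral_finset_sum _ (fun i _ => (hGint i).const_mul _)]
          simp_rw [MeasureTheory.integral_const_mul]
          rw [← Finset.mul_sum]
  · -- upper bound
    have step1 : ∀ i, (∫ x, G i x ∂ν)
        ≤ ∑ j, ((b i j + c i j) / 2) * ∫ x, |f j x| ^ p ∂ν := by
      intro i
      have h := integral_mono (hGint i) (hBoundInt i) (hGle i)
      rw [integral_finset_sum _ (fun j _ => (hIntf j).const_mul _)] at h
      simp_rw [MeasureTheory.integral_const_mul] at h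
      exact h
    have step2 : ∑ i, (∫ x, G i x ∂ν) ≤ ∑ j, ∫ x, |f j x| ^ p ∂ν := by
      calc ∑ i, (∫ x, G i x ∂ν)
          ≤ ∑ i, ∑ j, ((b i j + c i j) / 2) * ∫ x, |f j x| ^ p ∂ν :=
            Finset.sum_le_sum fun i _ => step1 i
        _ = ∑ j, ∫ x, |f j x| ^ p ∂ν := colsum _ hhalfcol _
    rw [div_eq_inv_mul]
    exact mul_le_mul_of_nonneg_left step2 hninv
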